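/- Fix λ_f ∈ (0,1), w_s > 0, w_f > 0, and suppose the evidence state at attack termination is the fully-eroded stationary state α_0 = 0, β_0 = B := w_f/(1-λ_f) (i.e., trust T_0 = 0). Let T_n be given by the recovery law T_n = (A + (0 - A)λ_f^n)/(A + (B - A)λ_f^n) with A = w_s/(1-λ_f). Then for any target level τ ∈ (0,1), T_n ≥ τ if and only if λ_f^n ≤ (1-τ)A / (A + τ(B - A)) — equivalently the recovery time n*(τ) = min{n : T_n ≥ τ} satisfies n*(τ) ≤ 1 + (1/log(1/λ_f)) · log( (A + τ(B-A)) / ((1-τ)A) ), and in particular n*(τ) grows at most logarithmically in the ratio w_f/w_s. -/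

import Mathlib

open Real

/-- Recovery from full trust erosion: threshold characterization and logarithmic
recovery-time bound. -/
theorem stmt_4 (lf ws wf : ℝ) (hlf : 0 < lf) (hlf1 : lf < 1)
    (hws : 0 < ws) (hwf : 0 < wf)
    (A B : ℝ) (hA : A = ws / (1 - lf)) (hB : B = wf / (1 - lf))
    (T : ℕ → ℝ)
    (hT : ∀ n, T n = (A + (0 - A) * lf ^ n) / (A + (B - A) * lf ^ n))
    (τ : ℝ) (hτ : τ ∈ Set.Ioo (0 : ℝ) 1) :
    (∀ n, τ ≤ T n ↔ lf ^ n ≤ (1 - τ) * A / (A + τ * (B - A))) ∧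
    (∃ n : ℕ, τ ≤ T n ∧
      (n : ℝ) ≤ 1 + (1 / Real.log (1 / lf)) *
        Real.log ((A + τ * (B - A)) / ((1 - τ) * A))) := by
  obtain ⟨hτ0, hτ1⟩ := hτ
  have h1lf : 0 < 1 - lf := by linarith
  have hA0 : 0 < A := by rw [hA]; positivity
  have hB0 : 0 < B := by rw [hB]; positivity
  have hpowpos : ∀ n : ℕ, 0 < lf ^ n := fun n => pow_pos hlf n
  have hpowle : ∀ n : ℕ, lf ^ n ≤ 1 := fun n => pow_le_one₀ hlf.le hlf1.le
  have hden : ∀ n : ℕ, 0 < A + (B - A) * lf ^ n := by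
    intro n
    nlinarith [hpowpos n, hpowle n]
  have hQ : 0 < A + τ * (B - A) := by nlinarith
  have hiff : ∀ n, τ ≤ T n ↔ lf ^ n ≤ (1 - τ) * A / (A + τ * (B - A)) := by
    intro n
    rw [hT n, le_div_iff₀ (hden n), le_div_iff₀ hQ]
    constructor <;> intro h <;> nlinarith
  refine ⟨hiff, ?_⟩
  set C : ℝ := (A + τ * (B - A)) / ((1 - τ) * A) with hC
  have hnum : (1 - τ) * A < A + τ * (B - A) := by nlinarith
  have hden2 : 0 < (1 - τ) * A := mul_pos (by linarith) hA0
  have hC1 : 1 < C := (one_lt_div hden2).mpr hnum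
  have hC0 : 0 < C := lt_trans one_pos hC1
  have hlogC : 0 ≤ Real.log C := Real.log_nonneg hC1.le
  have hL : 0 < Real.log (1 / lf) := by
    apply Real.log_pos
    rw [lt_div_iff₀ hlf]; linarith
  set x : ℝ := Real.log C / Real.log (1 / lf) with hx
  have hx0 : 0 ≤ x := div_nonneg hlogC hL.le
  refine ⟨⌈x⌉₊, ?_, ?_⟩
  · rw [hiff]
    have hRHS : (1 - τ) * A / (A + τ * (B - A)) = C⁻¹ := by
      rw [hC, inv_div]
    rw [hRHS]
    have hle : x ≤ (⌈x⌉₊ : ℝ) := Nat.le_ceil x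
    have hkey : Real.log C ≤ (⌈x⌉₊ : ℝ) * Real.log (1 / lf) := by
      calc Real.log C = x * Real.log (1 / lf) := by rw [hx, div_mul_cancel₀ _ hL.ne']
        _ ≤ (⌈x⌉₊ : ℝ) * Real.log (1 / lf) := by
            exact mul_le_mul_of_nonneg_right hle hL.le
    have : Real.log (lf ^ ⌈x⌉₊) ≤ Real.log C⁻¹ := by
      rw [Real.log_pow, Real.log_inv, Real.log_div one_ne_zero (ne_of_gt hlf),
        Real.log_one] at *
      linarith
    exact (Real.log_le_log_iff (hpowpos _) (by positivity)).mp this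
  · calc (⌈x⌉₊ : ℝ) ≤ x + 1 := (Nat.ceil_lt_add_one hx0).le
      _ = 1 + 1 / Real.log (1 / lf) * Real.log C := by rw [hx]; ring
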